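/- Let (A,V) and (B,W) be permutation groups with A, B ∈ DGR \ (GR ∪ {I₂}). Suppose there exists a ∈ Ā \ A which pairs all the pairs of paired Or-orbitals of A (that is, for every pair of Or-orbitals O₁ ≠ O₂ of A that are paired with each other, a(O₁) = O₂), and there exists b ∈ B̄ \ B which pairs all the pairs of paired Or-orbitals of B. Then the direct product A × B does not belong to GR; moreover, A × B is transitive on V × W. -/

import Mathlib

/-- A permutation `σ` is an automorphism of the edge-colored graph on `V`
with edge-color function `E`. -/
def IsGraphAut {V C : Type} (E : Sym2 V → C) (σ : Equiv.Perm V) : Prop :=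
  ∀ v w : V, v ≠ w → E s(σ v, σ w) = E s(v, w)

/-- A permutation `σ` is an automorphism of the edge-colored digraph on `V`
with edge-color function `E`. -/
def IsDigraphAut {V C : Type} (E : V × V → C) (σ : Equiv.Perm V) : Prop :=
  ∀ v w : V, v ≠ w → E (σ v, σ w) = E (v, w)

/-- A permutation group `(A, V)` belongs to the class `GR` iff it is the
automorphism group of an edge-colored graph on `V`. -/
def IsGR {V : Type} (A : Subgroup (Equiv.Perm V)) : Prop :=
  ∃ (C : Type) (E : Sym2 V → C), ∀ σ : Equiv.Perm V, σ ∈ A ↔ IsGraphAut E σ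

/-- A permutation group `(A, V)` belongs to the class `DGR` iff it is the
automorphism group of an edge-colored digraph on `V`. -/
def IsDGR {V : Type} (A : Subgroup (Equiv.Perm V)) : Prop :=
  ∃ (C : Type) (E : V × V → C), ∀ σ : Equiv.Perm V, σ ∈ A ↔ IsDigraphAut E σ

/-- The product-action homomorphism `Perm V × Perm W →* Perm (V × W)`,
`(a, b) (x, y) = (a x, b y)`. -/
def permProdHom (V W : Type) : Equiv.Perm V × Equiv.Perm W →* Equiv.Perm (V × W) where
  toFun p := Equiv.prodCongr p.1 p.2
  map_one' := Equiv.ext fun _ => rfl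
  map_mul' _ _ := Equiv.ext fun _ => rfl

/-- The direct product of the permutation groups `(A, V)` and `(B, W)`,
acting on `V × W` with the product action. -/
def PermProd {V W : Type} (A : Subgroup (Equiv.Perm V)) (B : Subgroup (Equiv.Perm W)) :
    Subgroup (Equiv.Perm (V × W)) :=
  (A.prod B).map (permProdHom V W)

/-- The Or-orbital of the ordered pair `(v₁, v₂)` under `A`. -/
def Orbital {V : Type} (A : Subgroup (Equiv.Perm V)) (v₁ v₂ : V) : Set (V × V) :=
  {p | ∃ a ∈ A, p = (a v₁, a v₂)}

/-- The Or-orbital of `(v₁, v₂)` is self-paired: it coincides with the orbital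
consisting of the reversed pairs. -/
def SelfPaired {V : Type} (A : Subgroup (Equiv.Perm V)) (v₁ v₂ : V) : Prop :=
  Orbital A v₁ v₂ = Orbital A v₂ v₁

/-- The orbit of `v` under the permutation group `A`. -/
def OrbitOf {V : Type} (A : Subgroup (Equiv.Perm V)) (v : V) : Set V :=
  {x | ∃ a ∈ A, x = a v}

/-- `σ` maps every NOr-orbital (orbit on unordered pairs of distinct elements)
of `A` onto itself. -/
def PreservesNOrOrbitals {V : Type} (A : Subgroup (Equiv.Perm V)) (σ : Equiv.Perm V) : Prop :=
  ∀ v w : V, v ≠ w → ∃ a ∈ A, s(σ v, σ w) = s(a v, a w)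

/-- `σ` maps every Or-orbital (orbit on ordered pairs of distinct elements)
of `A` onto itself. -/
def PreservesOrOrbitals {V : Type} (A : Subgroup (Equiv.Perm V)) (σ : Equiv.Perm V) : Prop :=
  ∀ v w : V, v ≠ w → ∃ a ∈ A, σ v = a v ∧ σ w = a w

/-- `Ā`: the set of all permutations of `V` mapping every NOr-orbital of `A`
onto itself (the smallest group in `GR` containing `A`). -/
def grClosure {V : Type} (A : Subgroup (Equiv.Perm V)) : Set (Equiv.Perm V) :=
  {σ | PreservesNOrOrbitals A σ}

/-- `σ` pairs all the pairs of paired Or-orbitals of `A`: for every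
non-self-paired Or-orbital `O`, the image of `O` under `σ` is the paired
orbital `O*`. -/
def PairsAllPairedOrbitals {V : Type} (A : Subgroup (Equiv.Perm V)) (σ : Equiv.Perm V) : Prop :=
  ∀ v₁ v₂ : V, v₁ ≠ v₂ → ¬ SelfPaired A v₁ v₂ →
    (fun p : V × V => (σ p.1, σ p.2)) '' Orbital A v₁ v₂ = Orbital A v₂ v₁

/-- The permutation group `(A, V)` is the group `I₂`: the trivial group acting
on a two-element set. -/
def IsI₂ {V : Type} [Fintype V] (A : Subgroup (Equiv.Perm V)) : Prop :=
  Fintype.card V = 2 ∧ A = ⊥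


lemma three_le_card_aux {V : Type} [Fintype V] (A : Subgroup (Equiv.Perm V))
    (h2 : ¬ IsI₂ A) {a : Equiv.Perm V} (ha : a ∉ A) : 3 ≤ Fintype.card V := by
  classical
  by_contra h
  push_neg at h
  rcases Nat.lt_or_ge (Fintype.card V) 2 with hlt | hge
  · have hsub : Subsingleton V := Fintype.card_le_one_iff_subsingleton.mp (by omega)
    have : a = 1 := Equiv.ext fun x => Subsingleton.elim _ _
    exact ha (this ▸ A.one_mem)
  · have hc2 : Fintype.card V = 2 := by omega
    have hAbot : A ≠ ⊥ := fun hb => h2 ⟨hc2, hb⟩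
    obtain ⟨⟨x, hxA⟩, hx1⟩ := Subgroup.ne_bot_iff_exists_ne_one.mp hAbot
    have hx1' : x ≠ 1 := fun h => hx1 (Subtype.ext h)
    have ha1 : a ≠ 1 := fun h => ha (h ▸ A.one_mem)
    have hcp : Fintype.card (Equiv.Perm V) = 2 := by
      rw [Fintype.card_perm, hc2]; rfl
    by_cases hax : a = x
    · exact ha (hax ▸ hxA)
    · have hcard3 : ({a, x, 1} : Finset (Equiv.Perm V)).card = 3 := by
        rw [Finset.card_insert_of_notMem (by simp [hax, ha1]),
          Finset.card_insert_of_notMem (by simp [hx1']), Finset.card_singleton]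
      have := Finset.card_le_univ ({a, x, 1} : Finset (Equiv.Perm V))
      rw [hcard3, hcp] at this
      omega

lemma exists_third_aux {V : Type} [Fintype V] (h : 3 ≤ Fintype.card V) (v v' : V) :
    ∃ x : V, x ≠ v ∧ x ≠ v' := by
  classical
  by_contra hcon
  push_neg at hcon
  have hsub : (Finset.univ : Finset V) ⊆ {v, v'} := by
    intro x _
    rcases eq_or_ne x v with hh | hh
    · simp [hh]
    · simp [hcon x hh]
  have h1 := Finset.card_le_card hsub
  have h2 : ({v, v'} : Finset V).card ≤ 2 :=
    (Finset.card_insert_le _ _).trans (by simp)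
  rw [Finset.card_univ] at h1
  omega

lemma star_aux {V : Type} (A : Subgroup (Equiv.Perm V)) (a : Equiv.Perm V)
    (h1 : PreservesNOrOrbitals A a) (h2 : PairsAllPairedOrbitals A a)
    {v v' : V} (hne : v ≠ v') : ∃ α ∈ A, a v = α v' ∧ a v' = α v := by
  by_cases hsp : SelfPaired A v v'
  · obtain ⟨α, hα, heq⟩ := h1 v v' hne
    rw [Sym2.eq_iff] at heq
    rcases heq with ⟨e1, e2⟩ | ⟨e1, e2⟩
    · have hmem : ((α v, α v') : V × V) ∈ Orbital A v' v := by
        rw [← hsp]; exact ⟨α, hα, rfl⟩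
      obtain ⟨α', hα', heq'⟩ := hmem
      have p1 : α v = α' v' := congrArg Prod.fst heq'
      have p2 : α v' = α' v := congrArg Prod.snd heq'
      exact ⟨α', hα', by rw [e1, p1], by rw [e2, p2]⟩
    · exact ⟨α, hα, e1, e2⟩
  · have himg := h2 v v' hne hsp
    have hmem : ((a v, a v') : V × V) ∈ Orbital A v' v := by
      rw [← himg]
      exact ⟨(v, v'), ⟨1, A.one_mem, by simp⟩, rfl⟩
    obtain ⟨α, hα, heq⟩ := hmem
    exact ⟨α, hα, congrArg Prod.fst heq, congrArg Prod.snd heq⟩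

lemma trans_of_star_aux {V : Type} [Fintype V] (A : Subgroup (Equiv.Perm V))
    (a : Equiv.Perm V) (hcard : 3 ≤ Fintype.card V)
    (hstar : ∀ v v' : V, v ≠ v' → ∃ α ∈ A, a v = α v' ∧ a v' = α v) :
    ∀ v v' : V, ∃ α ∈ A, α v = v' := by
  intro v v'
  obtain ⟨x, hxv, hxv'⟩ := exists_third_aux hcard v v'
  obtain ⟨α, hα, e1, -⟩ := hstar x v hxv
  obtain ⟨α', hα', e1', -⟩ := hstar x v' hxv'
  refine ⟨α'⁻¹ * α, A.mul_mem (A.inv_mem hα') hα, ?_⟩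
  rw [Equiv.Perm.mul_apply, ← e1, e1']
  exact Equiv.symm_apply_apply α' v'


/-- If `A, B ∈ DGR \ (GR ∪ {I₂})`, some `a ∈ Ā \ A` pairs all the pairs of
paired Or-orbitals of `A`, and some `b ∈ B̄ \ B` pairs all the pairs of paired
Or-orbitals of `B`, then `A × B ∉ GR`; moreover, `A × B` is transitive. -/
theorem not_isGR_prod_of_pairing {V W : Type} [Fintype V] [Fintype W]
    (A : Subgroup (Equiv.Perm V)) (B : Subgroup (Equiv.Perm W))
    (hA : IsDGR A) (hA' : ¬ IsGR A) (hA2 : ¬ IsI₂ A)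
    (hB : IsDGR B) (hB' : ¬ IsGR B) (hB2 : ¬ IsI₂ B)
    (ha : ∃ a ∈ grClosure A, a ∉ A ∧ PairsAllPairedOrbitals A a)
    (hb : ∃ b ∈ grClosure B, b ∉ B ∧ PairsAllPairedOrbitals B b) :
    ¬ IsGR (PermProd A B) ∧ ∀ p q : V × W, ∃ σ ∈ PermProd A B, σ p = q := by
  classical
  obtain ⟨a, haCl, haA, haP⟩ := ha
  obtain ⟨b, hbCl, hbB, hbP⟩ := hb
  have hVc : 3 ≤ Fintype.card V := three_le_card_aux A hA2 haA
  have hWc : 3 ≤ Fintype.card W := three_le_card_aux B hB2 hbB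
  have starA : ∀ v v' : V, v ≠ v' → ∃ α ∈ A, a v = α v' ∧ a v' = α v :=
    fun v v' h => star_aux A a haCl haP h
  have starB : ∀ w w' : W, w ≠ w' → ∃ β ∈ B, b w = β w' ∧ b w' = β w :=
    fun w w' h => star_aux B b hbCl hbP h
  have transA : ∀ v v' : V, ∃ α ∈ A, α v = v' := trans_of_star_aux A a hVc starA
  have transB : ∀ w w' : W, ∃ β ∈ B, β w = w' := trans_of_star_aux B b hWc starB
  set σ : Equiv.Perm (V × W) := permProdHom V W (a, b) with hσdef
  have hσapp : ∀ p : V × W, σ p = (a p.1, b p.2) := fun p => rfl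
  have hmemProd : ∀ (α : Equiv.Perm V) (β : Equiv.Perm W), α ∈ A → β ∈ B →
      permProdHom V W (α, β) ∈ PermProd A B := by
    intro α β hα hβ
    exact Subgroup.mem_map.mpr ⟨(α, β), Subgroup.mem_prod.mpr ⟨hα, hβ⟩, rfl⟩
  have hW0 : Nonempty W := Fintype.card_pos_iff.mp (by omega)
  obtain ⟨w₀⟩ := hW0
  have hσnot : σ ∉ PermProd A B := by
    intro hmem
    obtain ⟨⟨α, β⟩, hprod, heq⟩ := Subgroup.mem_map.mp hmem
    have hαA : α ∈ A := (Subgroup.mem_prod.mp hprod).1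
    have haα : a = α := by
      apply Equiv.ext
      intro v
      have := congrArg (fun e : Equiv.Perm (V × W) => (e (v, w₀)).1) heq
      exact this.symm
    exact haA (haα ▸ hαA)
  have hτex : ∀ p q : V × W, p ≠ q →
      ∃ τ ∈ PermProd A B, τ p = σ q ∧ τ q = σ p := by
    rintro ⟨v, w⟩ ⟨v', w'⟩ hpq
    by_cases hv : v = v'
    · subst hv
      have hw : w ≠ w' := fun h => hpq (by rw [h])
      obtain ⟨β, hβ, e1, e2⟩ := starB w w' hw
      obtain ⟨γ, hγ, e3⟩ := transA v (a v)
      refine ⟨permProdHom V W (γ, β), hmemProd γ β hγ hβ, ?_, ?_⟩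
      · show (γ v, β w) = (a v, b w')
        rw [e3, ← e2]
      · show (γ v, β w') = (a v, b w)
        rw [e3, ← e1]
    · obtain ⟨α, hα, f1, f2⟩ := starA v v' hv
      by_cases hw : w = w'
      · subst hw
        obtain ⟨δ, hδ, e3⟩ := transB w (b w)
        refine ⟨permProdHom V W (α, δ), hmemProd α δ hα hδ, ?_, ?_⟩
        · show (α v, δ w) = (a v', b w)
          rw [e3, ← f2]
        · show (α v', δ w) = (a v, b w)
          rw [e3, ← f1]
      · obtain ⟨β, hβ, e1, e2⟩ := starB w w' hw
        refine ⟨permProdHom V W (α, β), hmemProd α β hα hβ, ?_, ?_⟩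
        · show (α v, β w) = (a v', b w')
          rw [← f2, ← e2]
        · show (α v', β w') = (a v, b w)
          rw [← f1, ← e1]
  constructor
  · rintro ⟨C, E, hE⟩
    apply hσnot
    rw [hE]
    intro p q hpq
    obtain ⟨τ, hτmem, hτp, hτq⟩ := hτex p q hpq
    have hAut : IsGraphAut E τ := (hE τ).mp hτmem
    calc E s(σ p, σ q) = E s(τ q, τ p) := by rw [hτp, hτq]
      _ = E s(τ p, τ q) := by rw [Sym2.eq_swap]
      _ = E s(p, q) := hAut p q hpq
  · intro p q
    obtain ⟨α, hα, hαv⟩ := transA p.1 q.1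
    obtain ⟨β, hβ, hβw⟩ := transB p.2 q.2
    refine ⟨permProdHom V W (α, β), hmemProd α β hα hβ, ?_⟩
    show (α p.1, β p.2) = q
    rw [hαv, hβw]
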